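/- The function f(x) = c·x^φ with c = φ^{-1/φ} and φ = (1+√5)/2 satisfies the functional differential equation f'(x) = f⁻¹(x) for all x > 0, where f⁻¹ denotes the inverse function of f, and f(0) = 0. -/

import Mathlib

theorem golden_power_solves_f_prime_eq_f_inverse
    (finv : ℝ → ℝ)
    (hleft : ∀ x ∈ Set.Ici (0:ℝ),
      finv (((1 + Real.sqrt 5) / 2) ^ (-(1 / ((1 + Real.sqrt 5) / 2))) *
        x ^ ((1 + Real.sqrt 5) / 2)) = x)
    (hright : ∀ y ∈ Set.Ici (0:ℝ),
      ((1 + Real.sqrt 5) / 2) ^ (-(1 / ((1 + Real.sqrt 5) / 2))) *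
        (finv y) ^ ((1 + Real.sqrt 5) / 2) = y) :
    (((1 + Real.sqrt 5) / 2) ^ (-(1 / ((1 + Real.sqrt 5) / 2))) *
      (0:ℝ) ^ ((1 + Real.sqrt 5) / 2) = 0) ∧
    ∀ x : ℝ, 0 < x →
      deriv (fun x : ℝ => ((1 + Real.sqrt 5) / 2) ^ (-(1 / ((1 + Real.sqrt 5) / 2))) *
        x ^ ((1 + Real.sqrt 5) / 2)) x = finv x := by
  set φ : ℝ := (1 + Real.sqrt 5) / 2 with hφdef
  have h5 : Real.sqrt 5 ^ 2 = 5 := Real.sq_sqrt (by norm_num)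
  have hs : 2 ≤ Real.sqrt 5 := by nlinarith [Real.sqrt_nonneg 5]
  have hφ1 : 1 < φ := by rw [hφdef]; linarith
  have hφ0 : 0 < φ := by linarith
  have hφsq : φ ^ 2 = φ + 1 := by rw [hφdef]; field_simp; nlinarith
  have hinv : 1 / φ = φ - 1 := by
    rw [div_eq_iff hφ0.ne']; nlinarith
  set c : ℝ := φ ^ (-(1 / φ)) with hcdef
  have hc0 : 0 < c := Real.rpow_pos_of_pos hφ0 _
  constructor
  · rw [Real.zero_rpow hφ0.ne', mul_zero]
  · intro x hx
    have hderiv : deriv (fun x : ℝ => c * x ^ φ) x = c * (φ * x ^ (φ - 1)) := by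
      rw [deriv_const_mul _ (Real.hasDerivAt_rpow_const (Or.inl hx.ne')).differentiableAt,
        Real.deriv_rpow_const x φ]
    rw [hderiv]
    set d : ℝ := c * (φ * x ^ (φ - 1)) with hddef
    have hd0 : (0:ℝ) ≤ d := by positivity
    have hde : d = φ ^ (2 - φ) * x ^ (φ - 1) := by
      have h2 : (2 - φ) = -(1/φ) + 1 := by rw [hinv]; ring
      rw [hddef, hcdef, h2, Real.rpow_add hφ0, Real.rpow_one]; ring
    have key : c * d ^ φ = x := by
      rw [hde, Real.mul_rpow (by positivity) (by positivity),
        ← Real.rpow_mul hφ0.le, ← Real.rpow_mul hx.le]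
      have e1 : (2 - φ) * φ = φ - 1 := by nlinarith
      have e2 : (φ - 1) * φ = 1 := by nlinarith
      rw [e1, e2, Real.rpow_one, hcdef, ← mul_assoc,
        ← Real.rpow_add hφ0]
      have e3 : -(1 / φ) + (φ - 1) = 0 := by rw [hinv]; ring
      rw [e3, Real.rpow_zero, one_mul]
    have := hleft d hd0
    rw [key] at this
    exact this.symm
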